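/- Let c ∈ (0, c_crit) and let h : J → ℝ be a solution of the transformed Jang equation dh/ds = F_c(s, h(s)) on an interval J that is symmetric about 0 (J = -J), taking values in [-1,1], and satisfying h(0) = 0. Then h is an odd function: h(-s) = -h(s) for all s ∈ J. -/

import Mathlib

/-- The function `φ(r) = e^{r/(2m)-1}(r - 2m)` defining the Kruskal radius implicitly. -/
noncomputable def phi (m r : ℝ) : ℝ := Real.exp (r / (2*m) - 1) * (r - 2*m)

/-- The derivative `φ_r(r) = (r/(2m)) e^{r/(2m)-1}`. -/
noncomputable def phiR (m r : ℝ) : ℝ := (r / (2*m)) * Real.exp (r / (2*m) - 1)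

/-- The critical parameter `c_crit = √(8m/e)`. -/
noncomputable def cCrit (m : ℝ) : ℝ := Real.sqrt (8*m / Real.exp 1)

/-- The right-hand side of Jang's equation on the slice `L_c`:
`f''(u) = jangRHS m c u r (f'(u))` where `r = r(u)` solves `φ(r) = u(u+c)`. -/
noncomputable def jangRHS (m c u r p : ℝ) : ℝ :=
  c * Real.sqrt (2*m / phiR m r + p^2/4) *
      ((1 / phiR m r) * (1/(2*m) - 3/r) - p^2/(2*m*r))
    - ((2*u + c)/(4*m*r)) * p^3
    - ((2*u + c)/(2 * phiR m r)) * (1/(2*m) + 5/r) * p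

/-- The right-hand side `F_c(s,h)` of the transformed Jang equation,
with `r = r_c(s)` solving `φ(r) = (c²/4)(s²-1)`. -/
noncomputable def Fc (m c s r h : ℝ) : ℝ :=
  (c^2/2) * Real.sqrt (2*m*(1 - h^2) / phiR m r + h^2/4) *
      (((1 - h^2) / phiR m r) * (1/(2*m) - 3/r) - h^2/(2*m*r))
    - (c^2*s/(8*m*r)) * h^3
    - (c^2*s/(4 * phiR m r)) * (1/(2*m) + 5/r) * (h*(1 - h^2))

open Set Real

lemma phiR_pos {m r : ℝ} (hm : 0 < m) (hr : 0 < r) : 0 < phiR m r := by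
  unfold phiR; positivity

lemma Fc_symm (m c s r x : ℝ) : Fc m c (-s) r (-x) = Fc m c s r x := by
  unfold Fc
  rw [show (-x)^2 = x^2 by ring]
  ring

section main
variable {m c : ℝ}

lemma contDiffOn_G (hm : 0 < m)
    (O : Set (ℝ × ℝ × ℝ))
    (hO : ∀ p ∈ O, 0 < p.2.1 ∧
      (0:ℝ) < 2*m*(1 - p.2.2^2) / phiR m p.2.1 + p.2.2^2/4) :
    ContDiffOn ℝ 1 (fun p : ℝ × ℝ × ℝ => Fc m c p.1 p.2.1 p.2.2) O := by
  have ct : ContDiff ℝ 1 (fun p : ℝ×ℝ×ℝ => p.1) := contDiff_fst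
  have cr : ContDiff ℝ 1 (fun p : ℝ×ℝ×ℝ => p.2.1) := contDiff_fst.comp contDiff_snd
  have cx : ContDiff ℝ 1 (fun p : ℝ×ℝ×ℝ => p.2.2) := contDiff_snd.comp contDiff_snd
  have cP : ContDiff ℝ 1 (fun p : ℝ×ℝ×ℝ => phiR m p.2.1) := by
    unfold phiR
    exact (cr.div_const _).mul ((cr.div_const _).sub contDiff_const).exp
  have hPne : ∀ p ∈ O, phiR m p.2.1 ≠ 0 := fun p hp => (phiR_pos hm (hO p hp).1).ne'
  have hrne : ∀ p ∈ O, p.2.1 ≠ 0 := fun p hp => (hO p hp).1.ne'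
  have h2mr : ∀ p ∈ O, 2*m*p.2.1 ≠ 0 := fun p hp => by
    have := (hO p hp).1; positivity
  have h8mr : ∀ p ∈ O, 8*m*p.2.1 ≠ 0 := fun p hp => by
    have := (hO p hp).1; positivity
  have h4P : ∀ p ∈ O, 4 * phiR m p.2.1 ≠ 0 := fun p hp => by
    have := phiR_pos hm (hO p hp).1; positivity
  have cA : ContDiffOn ℝ 1
      (fun p : ℝ×ℝ×ℝ => 2*m*(1 - p.2.2^2) / phiR m p.2.1 + p.2.2^2/4) O :=
    ((contDiff_const.mul (contDiff_const.sub (cx.pow 2))).contDiffOn.div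
      cP.contDiffOn hPne).add ((cx.pow 2).div_const 4).contDiffOn
  have hAne : ∀ p ∈ O,
      2*m*(1 - p.2.2^2) / phiR m p.2.1 + p.2.2^2/4 ≠ 0 := fun p hp => (hO p hp).2.ne'
  have csqrt : ContDiffOn ℝ 1
      (fun p : ℝ×ℝ×ℝ => Real.sqrt (2*m*(1 - p.2.2^2) / phiR m p.2.1 + p.2.2^2/4)) O :=
    cA.sqrt hAne
  unfold Fc
  refine ContDiffOn.sub (ContDiffOn.sub ?_ ?_) ?_
  · exact (contDiff_const.contDiffOn.mul csqrt).mul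
      ((((contDiff_const.sub (cx.pow 2)).contDiffOn.div cP.contDiffOn hPne).mul
        (contDiff_const.contDiffOn.sub (contDiff_const.contDiffOn.div cr.contDiffOn hrne))).sub
       ((cx.pow 2).contDiffOn.div (contDiff_const.mul cr).contDiffOn h2mr))
  · exact ((contDiff_const.mul ct).contDiffOn.div
      (contDiff_const.mul cr).contDiffOn h8mr).mul (cx.pow 3).contDiffOn
  · exact (((contDiff_const.mul ct).contDiffOn.div (contDiff_const.mul cP).contDiffOn h4P).mul
      (contDiff_const.contDiffOn.add (contDiff_const.contDiffOn.div cr.contDiffOn hrne))).mul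
      (cx.mul (contDiff_const.sub (cx.pow 2))).contDiffOn

end main

section lip
variable {m c : ℝ}

lemma A_pos (hm : 0 < m) {r x : ℝ} (hr : 0 < r) (hx : x ∈ Icc (-1:ℝ) 1) :
    (0:ℝ) < 2*m*(1 - x^2) / phiR m r + x^2/4 := by
  have hφ := phiR_pos hm hr
  have hx2 : x^2 ≤ 1 := by nlinarith [hx.1, hx.2]
  rcases hx2.lt_or_eq with h | h
  · have t1 : 0 < 2*m*(1 - x^2) / phiR m r :=
      div_pos (by nlinarith) hφ
    have t2 : (0:ℝ) ≤ x^2/4 := by positivity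
    linarith
  · rw [h]; simp [hφ.ne']

lemma exists_lip (hm : 0 < m) (b r₁ r₂ : ℝ) (hr₁ : 0 < r₁) :
    ∃ K : NNReal, LipschitzOnWith K (fun p : ℝ × ℝ × ℝ => Fc m c p.1 p.2.1 p.2.2)
      (Icc (-b) b ×ˢ Icc r₁ r₂ ×ˢ Icc (-1:ℝ) 1) := by
  set G : ℝ × ℝ × ℝ → ℝ := fun p => Fc m c p.1 p.2.1 p.2.2 with hG
  set A : ℝ × ℝ × ℝ → ℝ := fun p => 2*m*(1 - p.2.2^2) / phiR m p.2.1 + p.2.2^2/4 with hA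
  set U : Set (ℝ × ℝ × ℝ) := {p | 0 < p.2.1} with hU
  set O : Set (ℝ × ℝ × ℝ) := U ∩ A ⁻¹' (Ioi 0) with hOdef
  have hUopen : IsOpen U := isOpen_lt continuous_const (continuous_fst.comp continuous_snd)
  have hPcont : Continuous (fun p : ℝ×ℝ×ℝ => phiR m p.2.1) := by
    unfold phiR; fun_prop
  have hAcont : ContinuousOn A U := by
    apply ContinuousOn.add
    · exact ContinuousOn.div (by fun_prop) hPcont.continuousOn
        (fun p hp => (phiR_pos hm hp).ne')
    · fun_prop
  have hOopen : IsOpen O := hAcont.isOpen_inter_preimage hUopen isOpen_Ioi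
  have hOmem : ∀ p ∈ O, 0 < p.2.1 ∧
      (0:ℝ) < 2*m*(1 - p.2.2^2) / phiR m p.2.1 + p.2.2^2/4 :=
    fun p hp => ⟨hp.1, hp.2⟩
  have cG : ContDiffOn ℝ 1 G O := contDiffOn_G hm O hOmem
  set K3 : Set (ℝ × ℝ × ℝ) := Icc (-b) b ×ˢ Icc r₁ r₂ ×ˢ Icc (-1:ℝ) 1 with hK3
  have hsub : K3 ⊆ O := by
    rintro p ⟨hpt, hpr, hpx⟩
    have hrpos : 0 < p.2.1 := lt_of_lt_of_le hr₁ hpr.1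
    exact ⟨hrpos, A_pos hm hrpos hpx⟩
  have hcpt : IsCompact K3 := (isCompact_Icc.prod (isCompact_Icc.prod isCompact_Icc))
  have hconv : Convex ℝ K3 := (convex_Icc _ _).prod ((convex_Icc _ _).prod (convex_Icc _ _))
  have hfd : ContinuousOn (fderiv ℝ G) O := cG.continuousOn_fderiv_of_isOpen hOopen le_rfl
  obtain ⟨C, hC⟩ := hcpt.exists_bound_of_continuousOn (hfd.mono hsub)
  refine ⟨⟨max C 0, le_max_right _ _⟩, ?_⟩
  apply Convex.lipschitzOnWith_of_nnnorm_hasFDerivWithin_le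
    (f' := fun x => fderiv ℝ G x) ?_ ?_ hconv
  · intro x hx
    exact (((cG.differentiableOn one_ne_zero).differentiableAt
      (hOopen.mem_nhds (hsub hx))).hasFDerivAt).hasFDerivWithinAt
  · intro x hx
    refine NNReal.coe_le_coe.mp ?_
    exact le_trans (hC x hx) (le_max_left _ _)
end lip

lemma hasDerivAt_phi' {m : ℝ} (hm : m ≠ 0) (r : ℝ) :
    HasDerivAt (phi m) (phiR m r) r := by
  have h1 : HasDerivAt (fun r : ℝ => r / (2*m) - 1) (1/(2*m)) r := by
    simpa using ((hasDerivAt_id r).div_const (2*m)).sub_const 1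
  have h3 : HasDerivAt (fun r : ℝ => r - 2*m) 1 r := (hasDerivAt_id r).sub_const _
  have h4 := h1.exp.mul h3
  refine h4.congr_deriv ?_
  unfold phiR
  have : Real.exp (r / (2*m) - 1) ≠ 0 := (Real.exp_pos _).ne'
  field_simp
  ring

lemma phi_strictMonoOn {m : ℝ} (hm : 0 < m) : StrictMonoOn (phi m) (Ioi 0) := by
  apply strictMonoOn_of_deriv_pos (convex_Ioi 0)
  · exact fun x _ => (hasDerivAt_phi' hm.ne' x).continuousAt.continuousWithinAt
  · intro x hx
    rw [interior_Ioi] at hx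
    rw [(hasDerivAt_phi' hm.ne' x).deriv]
    exact phiR_pos hm hx


/-- A solution of the transformed Jang equation on a symmetric interval `J`,
taking values in `[-1,1]` with `h(0) = 0`, is odd: `h(-s) = -h(s)` for all `s ∈ J`. -/
theorem solution_is_odd (m c : ℝ) (hm : 0 < m) (hc : c ∈ Set.Ioo 0 (cCrit m))
    (Rc : ℝ → ℝ)
    (hRc : ∀ s, 0 < Rc s ∧ phi m (Rc s) = c^2/4 * (s^2 - 1))
    (J : Set ℝ) (hJconn : J.OrdConnected) (hJsymm : (-J : Set ℝ) = J) (h0mem : (0:ℝ) ∈ J)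
    (h : ℝ → ℝ)
    (hrange : ∀ s ∈ J, h s ∈ Set.Icc (-1:ℝ) 1)
    (hsol : ∀ s ∈ J, HasDerivWithinAt h (Fc m c s (Rc s) (h s)) J s)
    (hinit : h 0 = 0) :
    ∀ s ∈ J, h (-s) = -h s := by
  obtain ⟨hc0, _⟩ := hc
  have hmono := phi_strictMonoOn hm
  have hRcpos : ∀ s, 0 < Rc s := fun s => (hRc s).1
  have hRceq : ∀ s, phi m (Rc s) = c^2/4 * (s^2 - 1) := fun s => (hRc s).2
  have hRceven : ∀ s, Rc (-s) = Rc s := by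
    intro s
    apply hmono.injOn (hRcpos _) (hRcpos _)
    rw [hRceq, hRceq]; ring_nf
  have hnegJ : ∀ t ∈ J, -t ∈ J := by
    intro t ht
    rw [← hJsymm]
    simpa using ht
  -- Rc monotone bounds
  have hRcle : ∀ s t : ℝ, s^2 ≤ t^2 → Rc s ≤ Rc t := by
    intro s t hst
    refine (hmono.le_iff_le (hRcpos s) (hRcpos t)).mp ?_
    rw [hRceq, hRceq]
    nlinarith [sq_nonneg c]
  intro s₀ hs₀
  rcases eq_or_ne s₀ 0 with rfl | hs₀ne
  · simp [hinit]
  set b := |s₀| with hb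
  have hbpos : 0 < b := abs_pos.mpr hs₀ne
  have hbJ : b ∈ J := by
    rcases abs_choice s₀ with h' | h'
    · rwa [hb, h']
    · rw [hb, h']; exact hnegJ _ hs₀
  have hIccJ : Icc (-b) b ⊆ J := hJconn.out (hnegJ _ hbJ) hbJ
  have hRcmem : ∀ t ∈ Icc (-b) b, Rc t ∈ Icc (Rc 0) (Rc b) := by
    intro t ht
    constructor
    · exact hRcle 0 t (by nlinarith [sq_nonneg t])
    · refine hRcle t b ?_
      have h1 : |t| ≤ b := abs_le.mpr ⟨ht.1, ht.2⟩
      nlinarith [abs_nonneg t, sq_abs t]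
  obtain ⟨K, hK⟩ := exists_lip (m := m) (c := c) hm b (Rc 0) (Rc b) (hRcpos 0)
  -- clamping
  set cl : ℝ → ℝ := fun t => max (-b) (min b t) with hcl
  have hclmem : ∀ t, cl t ∈ Icc (-b) b := by
    intro t
    constructor
    · exact le_max_left _ _
    · exact max_le (by linarith) (min_le_left _ _)
  have hclid : ∀ t ∈ Icc (-b) b, cl t = t := by
    intro t ht
    simp only [hcl]
    rw [min_eq_right ht.2, max_eq_right ht.1]
  set v : ℝ → ℝ → ℝ := fun t x => Fc m c (cl t) (Rc (cl t)) x with hv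
  have hvlip : ∀ t, LipschitzOnWith K (v t) (Icc (-1:ℝ) 1) := by
    intro t
    apply LipschitzOnWith.of_dist_le_mul
    intro x hx y hy
    have hmx : (cl t, Rc (cl t), x) ∈ Icc (-b) b ×ˢ Icc (Rc 0) (Rc b) ×ˢ Icc (-1:ℝ) 1 :=
      ⟨hclmem t, hRcmem _ (hclmem t), hx⟩
    have hmy : (cl t, Rc (cl t), y) ∈ Icc (-b) b ×ˢ Icc (Rc 0) (Rc b) ×ˢ Icc (-1:ℝ) 1 :=
      ⟨hclmem t, hRcmem _ (hclmem t), hy⟩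
    have := hK.dist_le_mul _ hmx _ hmy
    have hd : dist ((cl t, Rc (cl t), x) : ℝ × ℝ × ℝ) (cl t, Rc (cl t), y) = dist x y := by
      rw [Prod.dist_eq, Prod.dist_eq]
      simp only [dist_self]
      rw [max_eq_right (le_max_left _ _), max_eq_right dist_nonneg]
    rwa [hd] at this
  -- set up the two solutions
  set g : ℝ → ℝ := fun t => -h (-t) with hgdef
  have hcontIcc : ContinuousOn h (Icc (-b) b) := fun t ht =>
    ((hsol t (hIccJ ht)).continuousWithinAt).mono hIccJ
  have hmaps : MapsTo (fun t : ℝ => -t) (Icc (-b) b) (Icc (-b) b) := by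
    intro t ht
    exact ⟨neg_le_neg ht.2, neg_le.mpr ht.1⟩
  have hgcont : ContinuousOn g (Icc (-b) b) :=
    (hcontIcc.comp continuous_neg.continuousOn hmaps).neg
  have hDa : ∀ t ∈ Ioo (-b) b, HasDerivAt h (Fc m c t (Rc t) (h t)) t := by
    intro t ht
    exact (hsol t (hIccJ (Ioo_subset_Icc_self ht))).hasDerivAt
      (Filter.mem_of_superset (Icc_mem_nhds ht.1 ht.2) hIccJ)
  have hf' : ∀ t ∈ Ioo (-b) b, HasDerivAt h (v t (h t)) t := by
    intro t ht
    have := hDa t ht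
    simpa only [hv, hclid t (Ioo_subset_Icc_self ht)] using this
  have hg' : ∀ t ∈ Ioo (-b) b, HasDerivAt g (v t (g t)) t := by
    intro t ht
    have hnt : -t ∈ Ioo (-b) b := ⟨by linarith [ht.2], by linarith [ht.1]⟩
    have hd := hDa (-t) hnt
    have h2 := (hd.comp t (hasDerivAt_neg t)).neg
    rw [mul_neg_one, neg_neg] at h2
    have h3 : Fc m c (-t) (Rc (-t)) (h (-t)) = v t (g t) := by
      rw [hRceven t, show h (-t) = -(g t) by simp [hgdef],
        Fc_symm m c t (Rc t) (g t)]
      simp only [hv, hclid t (Ioo_subset_Icc_self ht)]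
    rw [h3] at h2
    exact h2
  have hfs : ∀ t ∈ Ioo (-b) b, h t ∈ Icc (-1:ℝ) 1 := fun t ht =>
    hrange t (hIccJ (Ioo_subset_Icc_self ht))
  have hgs : ∀ t ∈ Ioo (-b) b, g t ∈ Icc (-1:ℝ) 1 := by
    intro t ht
    have hnt : -t ∈ Ioo (-b) b := ⟨by linarith [ht.2], by linarith [ht.1]⟩
    have := hrange (-t) (hIccJ (Ioo_subset_Icc_self hnt))
    exact ⟨by simp [hgdef]; linarith [this.2], by simp [hgdef]; linarith [this.1]⟩
  have heq0 : h 0 = g 0 := by simp [hgdef, hinit]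
  have key : EqOn h g (Icc (-b) b) :=
    ODE_solution_unique_of_mem_Icc (fun t _ => hvlip t) ⟨neg_lt_zero.mpr hbpos, hbpos⟩
      hcontIcc hf' hfs hgcont hg' hgs heq0
  have hs₀mem : s₀ ∈ Icc (-b) b := ⟨neg_abs_le s₀, le_abs_self s₀⟩
  have := key hs₀mem
  simp only [hgdef] at this
  linarith
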